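/- Let g be a multiplicative function with |g(p)| ≤ β on primes, let g₁ be the exponentially multiplicative function with g₁(p) = g(p), and define g₂ by the Dirichlet convolution identity g = g₁ * g₂. Then g₂ is multiplicative with g₂(p) = 0 and g₂(p^k) = ∑_{r=0}^{k} (−g(p))^r g(p^{k−r}) / r! for k ≥ 2. -/

import Mathlib

open Finset ArithmeticFunction

noncomputable def myF (g : ℕ → ℂ) (p k : ℕ) : ℂ :=
  ∑ r ∈ Finset.range (k + 1), (-(g p)) ^ r * g (p ^ (k - r)) / (Nat.factorial r : ℂ)

noncomputable def toAF (f : ℕ → ℂ) : ArithmeticFunction ℂ :=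
  ⟨fun n => if n = 0 then 0 else f n, rfl⟩

lemma toAF_apply (f : ℕ → ℂ) {n : ℕ} (hn : n ≠ 0) : toAF f n = f n := if_neg hn

noncomputable def myH (g : ℕ → ℂ) : ArithmeticFunction ℂ :=
  ⟨fun n => if n = 0 then 0 else ∏ p ∈ n.primeFactors, myF g p (n.factorization p), rfl⟩

lemma toAF_mult (f : ℕ → ℂ) (h1 : f 1 = 1)
    (hm : ∀ m n : ℕ, Nat.Coprime m n → f (m * n) = f m * f n) :
    (toAF f).IsMultiplicative := by
  rw [ArithmeticFunction.IsMultiplicative.iff_ne_zero]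
  refine ⟨by rw [toAF_apply f one_ne_zero, h1], fun {m n} hm0 hn0 hcop => ?_⟩
  rw [toAF_apply f (mul_ne_zero hm0 hn0), toAF_apply f hm0, toAF_apply f hn0, hm _ _ hcop]

lemma myH_apply (g : ℕ → ℂ) {n : ℕ} (hn : n ≠ 0) :
    myH g n = ∏ p ∈ n.primeFactors, myF g p (n.factorization p) := if_neg hn

lemma myH_mult (g : ℕ → ℂ) : (myH g).IsMultiplicative := by
  rw [ArithmeticFunction.IsMultiplicative.iff_ne_zero]
  constructor
  · rw [myH_apply g one_ne_zero]; simp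
  · intro m n hm0 hn0 hcop
    rw [myH_apply g (mul_ne_zero hm0 hn0), myH_apply g hm0, myH_apply g hn0,
      Nat.primeFactors_mul hm0 hn0, Finset.prod_union hcop.disjoint_primeFactors]
    have hdisj := hcop.disjoint_primeFactors
    congr 1
    · refine Finset.prod_congr rfl fun p hp => ?_
      have hpn : n.factorization p = 0 := by
        have : p ∉ n.primeFactors := Finset.disjoint_left.mp hdisj hp
        rwa [← Nat.support_factorization, Finsupp.notMem_support_iff] at this
      rw [Nat.factorization_mul hm0 hn0, Finsupp.add_apply, hpn, add_zero]
    · refine Finset.prod_congr rfl fun p hp => ?_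
      have hpm : m.factorization p = 0 := by
        have : p ∉ m.primeFactors := Finset.disjoint_right.mp hdisj hp
        rwa [← Nat.support_factorization, Finsupp.notMem_support_iff] at this
      rw [Nat.factorization_mul hm0 hn0, Finsupp.add_apply, hpm, zero_add]

lemma myH_pp (g : ℕ → ℂ) (hg1 : g 1 = 1) {p : ℕ} (hp : p.Prime) (k : ℕ) :
    myH g (p ^ k) = myF g p k := by
  rcases Nat.eq_zero_or_pos k with rfl | hk
  · rw [pow_zero, myH_apply g one_ne_zero]
    simp [myF, hg1]
  · rw [myH_apply g (pow_ne_zero k hp.pos.ne'),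
      Nat.primeFactors_prime_pow hk.ne' hp, hp.factorization_pow,
      Finset.prod_singleton, Finsupp.single_eq_same]

lemma triangle (k : ℕ) (f : ℕ → ℕ → ℂ) :
    ∑ j ∈ range (k + 1), ∑ r ∈ range (k - j + 1), f j r
      = ∑ m ∈ range (k + 1), ∑ j ∈ range (m + 1), f j (m - j) := by
  rw [Finset.sum_sigma', Finset.sum_sigma']
  refine Finset.sum_nbij' (fun x => ⟨x.1 + x.2, x.1⟩) (fun x => ⟨x.2, x.1 - x.2⟩) ?_ ?_ ?_ ?_ ?_
  · rintro ⟨j, r⟩ h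
    simp only [Finset.mem_sigma, Finset.mem_range] at h ⊢
    omega
  · rintro ⟨m, j⟩ h
    simp only [Finset.mem_sigma, Finset.mem_range] at h ⊢
    omega
  · rintro ⟨j, r⟩ h
    simp only [Finset.mem_sigma, Finset.mem_range] at h
    simp
  · rintro ⟨m, j⟩ h
    simp only [Finset.mem_sigma, Finset.mem_range] at h
    show (⟨j + (m - j), j⟩ : Σ _ : ℕ, ℕ) = ⟨m, j⟩
    rw [Nat.add_sub_cancel' (by omega : j ≤ m)]
  · rintro ⟨j, r⟩ h
    simp only [Finset.mem_sigma, Finset.mem_range] at h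
    simp only [Nat.add_sub_cancel_left]

lemma inner_binom (x : ℂ) (m : ℕ) :
    ∑ j ∈ range (m + 1), x ^ j / (Nat.factorial j : ℂ)
      * ((-x) ^ (m - j) / (Nat.factorial (m - j) : ℂ))
      = if m = 0 then 1 else 0 := by
  have h0 : (x + -x) ^ m = ∑ j ∈ range (m + 1),
      x ^ j * (-x) ^ (m - j) * (m.choose j : ℂ) := add_pow x (-x) m
  have hm : (Nat.factorial m : ℂ) ≠ 0 := Nat.cast_ne_zero.mpr m.factorial_ne_zero
  have key : ∑ j ∈ range (m + 1), x ^ j / (Nat.factorial j : ℂ)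
      * ((-x) ^ (m - j) / (Nat.factorial (m - j) : ℂ))
      = (x + -x) ^ m / (Nat.factorial m : ℂ) := by
    rw [h0, Finset.sum_div]
    refine Finset.sum_congr rfl fun j hj => ?_
    have hjm : j ≤ m := by simp only [Finset.mem_range] at hj; omega
    have hfact : (m.choose j : ℂ) * (Nat.factorial j : ℂ) * (Nat.factorial (m - j) : ℂ)
        = (Nat.factorial m : ℂ) := by
      rw [← Nat.cast_mul, ← Nat.cast_mul, Nat.choose_mul_factorial_mul_factorial hjm]
    have hj0 : (Nat.factorial j : ℂ) ≠ 0 := Nat.cast_ne_zero.mpr j.factorial_ne_zero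
    have hj1 : (Nat.factorial (m - j) : ℂ) ≠ 0 := Nat.cast_ne_zero.mpr (m - j).factorial_ne_zero
    field_simp
    rw [← hfact]
    ring
  rw [key, add_neg_cancel]
  rcases Nat.eq_zero_or_pos m with rfl | hmp
  · simp
  · rw [zero_pow hmp.ne', zero_div, if_neg hmp.ne']

lemma key (g g₁ : ℕ → ℂ) (hg1 : g 1 = 1) (hg₁1 : g₁ 1 = 1)
    (hg₁p : ∀ (p k : ℕ), p.Prime → 1 ≤ k → g₁ (p ^ k) = g p ^ k / (Nat.factorial k : ℂ))
    {p : ℕ} (hp : p.Prime) (k : ℕ) :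
    ∑ j ∈ range (k + 1), g₁ (p ^ j) * myF g p (k - j) = g (p ^ k) := by
  have hterm : ∀ j ∈ Finset.range (k + 1), g₁ (p ^ j) * myF g p (k - j)
      = ∑ r ∈ Finset.range (k - j + 1),
          g p ^ j / (Nat.factorial j : ℂ)
            * ((-(g p)) ^ r * g (p ^ (k - j - r)) / (Nat.factorial r : ℂ)) := by
    intro j _
    have h1 : g₁ (p ^ j) = g p ^ j / (Nat.factorial j : ℂ) := by
      rcases Nat.eq_zero_or_pos j with rfl | hjp
      · simp [hg₁1]
      · exact hg₁p p j hp hjp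
    rw [h1, myF, Finset.mul_sum]
  rw [Finset.sum_congr rfl hterm, triangle]
  have hmid : ∀ m ∈ Finset.range (k + 1),
      (∑ j ∈ Finset.range (m + 1), g p ^ j / (Nat.factorial j : ℂ)
        * ((-(g p)) ^ (m - j) * g (p ^ (k - j - (m - j))) / (Nat.factorial (m - j) : ℂ)))
      = (if m = 0 then (1 : ℂ) else 0) * g (p ^ (k - m)) := by
    intro m hm
    have hin : ∀ j ∈ Finset.range (m + 1),
        g p ^ j / (Nat.factorial j : ℂ)
          * ((-(g p)) ^ (m - j) * g (p ^ (k - j - (m - j))) / (Nat.factorial (m - j) : ℂ))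
        = (g p ^ j / (Nat.factorial j : ℂ)
            * ((-(g p)) ^ (m - j) / (Nat.factorial (m - j) : ℂ))) * g (p ^ (k - m)) := by
      intro j hj
      simp only [Finset.mem_range] at hm hj
      have : k - j - (m - j) = k - m := by omega
      rw [this]
      ring
    rw [Finset.sum_congr rfl hin, ← Finset.sum_mul, inner_binom]
  rw [Finset.sum_congr rfl hmid]
  simp

theorem stmt12 (g g₁ g₂ : ℕ → ℂ) (β : ℝ)
    (hg1 : g 1 = 1) (hgm : ∀ m n : ℕ, Nat.Coprime m n → g (m * n) = g m * g n)
    (hgb : ∀ p : ℕ, p.Prime → ‖g p‖ ≤ β)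
    (hg₁1 : g₁ 1 = 1)
    (hg₁m : ∀ m n : ℕ, Nat.Coprime m n → g₁ (m * n) = g₁ m * g₁ n)
    (hg₁p : ∀ (p k : ℕ), p.Prime → 1 ≤ k → g₁ (p ^ k) = g p ^ k / (Nat.factorial k : ℂ))
    (hconv : ∀ n : ℕ, 1 ≤ n → g n = ∑ d ∈ n.divisors, g₁ d * g₂ (n / d)) :
    (g₂ 1 = 1 ∧ ∀ m n : ℕ, Nat.Coprime m n → g₂ (m * n) = g₂ m * g₂ n) ∧
    (∀ p : ℕ, p.Prime → g₂ p = 0) ∧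
    (∀ (p k : ℕ), p.Prime → 2 ≤ k →
      g₂ (p ^ k) = ∑ r ∈ Finset.range (k + 1),
        (-(g p)) ^ r * g (p ^ (k - r)) / (Nat.factorial r : ℂ)) := by
  have hgAF : (toAF g).IsMultiplicative := toAF_mult g hg1 hgm
  have hg₁AF : (toAF g₁).IsMultiplicative := toAF_mult g₁ hg₁1 hg₁m
  have hmulAF : (toAF g₁ * myH g).IsMultiplicative := hg₁AF.mul (myH_mult g)
  have hEq : toAF g = toAF g₁ * myH g := by
    rw [ArithmeticFunction.IsMultiplicative.eq_iff_eq_on_prime_powers _ hgAF _ hmulAF]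
    intro q i hq
    rw [toAF_apply g (pow_ne_zero i hq.pos.ne'), ArithmeticFunction.mul_apply,
      Nat.sum_divisorsAntidiagonal (f := fun d e => toAF g₁ d * myH g e),
      Nat.sum_divisors_prime_pow hq]
    rw [← key g g₁ hg1 hg₁1 hg₁p hq i]
    refine Finset.sum_congr rfl fun j hj => ?_
    have hji : j ≤ i := by simp only [Finset.mem_range] at hj; omega
    rw [Nat.pow_div hji hq.pos, toAF_apply g₁ (pow_ne_zero j hq.pos.ne'),
      myH_pp g hg1 hq]
  have hconvH : ∀ n : ℕ, 1 ≤ n → g n = ∑ d ∈ n.divisors, g₁ d * (myH g) (n / d) := by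
    intro n hn
    have h2 : toAF g n = (toAF g₁ * myH g) n := by rw [hEq]
    rw [toAF_apply g (by omega), ArithmeticFunction.mul_apply,
      Nat.sum_divisorsAntidiagonal (f := fun d e => toAF g₁ d * myH g e)] at h2
    rw [h2]
    refine Finset.sum_congr rfl fun d hd => ?_
    rw [toAF_apply g₁ (Nat.pos_of_mem_divisors hd).ne']
  have huniq : ∀ n : ℕ, 1 ≤ n → g₂ n = myH g n := by
    intro n
    induction n using Nat.strong_induction_on with
    | _ n ih =>
      intro hn
      have h3 : ∑ d ∈ n.divisors, g₁ d * g₂ (n / d)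
          = ∑ d ∈ n.divisors, g₁ d * myH g (n / d) := by
        rw [← hconv n hn, ← hconvH n hn]
      have h1mem : 1 ∈ n.divisors := Nat.one_mem_divisors.mpr (by omega)
      rw [← Finset.add_sum_erase _ _ h1mem, ← Finset.add_sum_erase _ _ h1mem] at h3
      have h4 : ∑ d ∈ n.divisors.erase 1, g₁ d * g₂ (n / d)
          = ∑ d ∈ n.divisors.erase 1, g₁ d * myH g (n / d) := by
        refine Finset.sum_congr rfl fun d hd => ?_
        have hd' := Finset.mem_of_mem_erase hd
        have hd1 : d ≠ 1 := Finset.ne_of_mem_erase hd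
        have hdpos : 0 < d := Nat.pos_of_mem_divisors hd'
        have hdvd : d ∣ n := Nat.dvd_of_mem_divisors hd'
        have hlt : n / d < n := Nat.div_lt_self (by omega) (by omega)
        have hge : 1 ≤ n / d := (Nat.one_le_div_iff hdpos).mpr (Nat.le_of_dvd (by omega) hdvd)
        rw [ih _ hlt hge]
      rw [h4] at h3
      have h5 := add_right_cancel h3
      simpa [hg₁1] using h5
  have h21 : g₂ 1 = 1 := by rw [huniq 1 le_rfl]; exact (myH_mult g).1
  refine ⟨⟨h21, ?_⟩, ?_, ?_⟩
  · intro m n hcop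
    rcases Nat.eq_zero_or_pos m with rfl | hm
    · obtain rfl : n = 1 := (Nat.coprime_zero_left n).mp hcop
      rw [mul_one, h21, mul_one]
    rcases Nat.eq_zero_or_pos n with rfl | hn
    · obtain rfl : m = 1 := (Nat.coprime_zero_right m).mp hcop
      rw [one_mul, h21, one_mul]
    rw [huniq m hm, huniq n hn, huniq (m * n) (Nat.mul_pos hm hn),
      (myH_mult g).2 hcop]
  · intro p hp
    have h := myH_pp g hg1 hp 1
    rw [pow_one] at h
    rw [huniq p hp.pos, h, myF]
    simp [Finset.sum_range_succ, hg1]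
  · intro p k hp _
    rw [huniq (p ^ k) (pow_pos hp.pos k), myH_pp g hg1 hp k, myF]
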